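/- Let (Z_t) be the generation sizes of the unimodular Galton–Watson process with offspring distributions supported on {k_min−1, ..., k_max−1} after the first generation (k_min ≥ 2) and mean a > 1. Then there exist constants c₀, c₁ > 0 such that for every s ≥ k_max + 1, P(Z_k ≤ a^k · s for all k ∈ ℕ) ≥ 1 − c₀ · exp(−c₁ s). -/

import Mathlib

open MeasureTheory ProbabilityTheory

open Real in

lemma aux_measurable_sum_range {Ω : Type*} {m : MeasurableSpace Ω} {X : Ω → ℕ} {Y : ℕ → Ω → ℕ}
    (hX : Measurable[m] X) (hY : ∀ i, Measurable[m] (Y i)) :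
    Measurable[m] (fun ω => ∑ i ∈ Finset.range (X ω), Y i ω) := by
  apply measurable_to_countable'
  intro n
  have h : (fun ω => ∑ i ∈ Finset.range (X ω), Y i ω) ⁻¹' {n}
      = ⋃ (M : ℕ), (X ⁻¹' {M}) ∩ ((fun ω => ∑ i ∈ Finset.range M, Y i ω) ⁻¹' {n}) := by
    ext ω
    simp only [Set.mem_preimage, Set.mem_singleton_iff, Set.mem_iUnion, Set.mem_inter_iff]
    constructor
    · intro hsum; exact ⟨X ω, rfl, hsum⟩
    · rintro ⟨M, hM, hsum⟩; rw [hM]; exact hsum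
  rw [h]
  exact MeasurableSet.iUnion fun M => (hX (measurableSet_singleton M)).inter
    ((Finset.measurable_sum (Finset.range M) fun i _ => hY i) (measurableSet_singleton n))

lemma aux_indep {Ω : Type*} [MeasurableSpace Ω] {μ : Measure Ω}
    (Z1 : Ω → ℕ) (ξ : ℕ → ℕ → Ω → ℕ)
    (hZ1m : Measurable Z1) (hξm : ∀ t i, Measurable (ξ t i))
    (hindep : iIndepFun
      (fun o : Option (ℕ × ℕ) => o.elim Z1 (fun ti => ξ ti.1 ti.2)) μ)
    (Z : ℕ → Ω → ℕ) (hZone : Z 1 = Z1)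
    (hZrec : ∀ t, 1 ≤ t → ∀ ω, Z (t + 1) ω = ∑ i ∈ Finset.range (Z t ω), ξ t i ω)
    (t : ℕ) (ht : 1 ≤ t) (n : ℕ) (A B : Set ℕ) :
    μ (Z t ⁻¹' A ∩ (fun ω => ∑ i ∈ Finset.range n, ξ t i ω) ⁻¹' B)
      = μ (Z t ⁻¹' A) * μ ((fun ω => ∑ i ∈ Finset.range n, ξ t i ω) ⁻¹' B) := by
  set F : Option (ℕ × ℕ) → Ω → ℕ := fun o => o.elim Z1 (fun ti => ξ ti.1 ti.2) with hF
  set mσ : Option (ℕ × ℕ) → MeasurableSpace Ω :=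
    fun o => MeasurableSpace.comap (F o) inferInstance with hmσ
  have hle : ∀ o, mσ o ≤ ‹MeasurableSpace Ω› := by
    rintro (_ | p)
    · exact hZ1m.comap_le
    · exact (hξm p.1 p.2).comap_le
  set SL : ℕ → Set (Option (ℕ × ℕ)) :=
    fun u => {o | o = none ∨ ∃ p : ℕ × ℕ, p.1 < u ∧ o = some p} with hSL
  set ST : Set (Option (ℕ × ℕ)) := {o | ∃ i, o = some (t, i)} with hST
  have hdisj : Disjoint (SL t) ST := by
    refine Set.disjoint_left.2 ?_
    rintro o (rfl | ⟨p, hp, rfl⟩) ⟨i, h⟩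
    · cases h
    · rw [Option.some.injEq] at h
      subst h
      exact absurd rfl (Nat.ne_of_lt hp)
  have hInd : Indep (⨆ o ∈ SL t, mσ o) (⨆ o ∈ ST, mσ o) μ :=
    indep_iSup_of_disjoint hle hindep.iIndep hdisj
  have hmL : ∀ u, 1 ≤ u → Measurable[⨆ o ∈ SL u, mσ o] (Z u) := by
    intro u hu
    induction u, hu using Nat.le_induction with
    | base =>
      rw [hZone]
      exact Measurable.of_comap_le
        (le_iSup₂ (f := fun o (_ : o ∈ SL 1) => mσ o) none (Or.inl rfl))
    | succ u hu ih =>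
      have hfun : Z (u + 1) = fun ω => ∑ i ∈ Finset.range (Z u ω), ξ u i ω :=
        funext (hZrec u hu)
      rw [hfun]
      refine aux_measurable_sum_range ?_ ?_
      · refine ih.mono ?_ le_rfl
        refine biSup_mono ?_
        rintro o (rfl | ⟨p, hp, rfl⟩)
        · exact Or.inl rfl
        · exact Or.inr ⟨p, hp.trans (Nat.lt_succ_self u), rfl⟩
      · intro i
        exact Measurable.of_comap_le
          (le_iSup₂ (f := fun o (_ : o ∈ SL (u + 1)) => mσ o) (some (u, i))
            (Or.inr ⟨(u, i), Nat.lt_succ_self u, rfl⟩))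
  have hmR : Measurable[⨆ o ∈ ST, mσ o] (fun ω => ∑ i ∈ Finset.range n, ξ t i ω) := by
    refine Finset.measurable_sum _ fun i _ => ?_
    exact Measurable.of_comap_le
      (le_iSup₂ (f := fun o (_ : o ∈ ST) => mσ o) (some (t, i)) ⟨i, rfl⟩)
  exact (Indep_iff _ _ _).1 hInd _ _ (hmL t ht MeasurableSet.of_discrete)
    (hmR MeasurableSet.of_discrete)


lemma aux_iIndepFun_precomp {Ω ι ι' β : Type*} [MeasurableSpace Ω] [MeasurableSpace β]
    {μ : Measure Ω} {f : ι → Ω → β}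
    (h : iIndepFun f μ) {g : ι' → ι} (hg : Function.Injective g) :
    iIndepFun (fun j => f (g j)) μ := by
  classical
  rw [iIndepFun_iff_measure_inter_preimage_eq_mul] at h ⊢
  intro S sets hsets
  set sets' : ι → Set β := fun i => ⋂ j ∈ S.filter (fun j => g j = i), sets j with hsets'def
  have hfil : ∀ j ∈ S, S.filter (fun j' => g j' = g j) = {j} := by
    intro j hj
    ext j'
    simp only [Finset.mem_filter, Finset.mem_singleton]
    constructor
    · rintro ⟨_, he⟩; exact hg he
    · rintro rfl; exact ⟨hj, rfl⟩
  have hkey : ∀ j ∈ S, sets' (g j) = sets j := by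
    intro j hj
    rw [hsets'def]
    simp only [hfil j hj]
    simp
  have hm' : ∀ i ∈ S.image g, MeasurableSet (sets' i) := by
    intro i _
    exact MeasurableSet.biInter (Finset.countable_toSet _)
      (fun j hj => hsets j (Finset.mem_filter.1 hj).1)
  have hmain := h (S.image g) hm'
  rw [Finset.set_biInter_finset_image, Finset.prod_image (fun j _ j' _ e => hg e)] at hmain
  calc μ (⋂ j ∈ S, f (g j) ⁻¹' sets j)
      = μ (⋂ j ∈ S, f (g j) ⁻¹' sets' (g j)) := by
        congr 1; exact (Set.iInter₂_congr fun j hj => by rw [hkey j hj]).symm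
    _ = ∏ j ∈ S, μ (f (g j) ⁻¹' sets' (g j)) := hmain
    _ = ∏ j ∈ S, μ (f (g j) ⁻¹' sets j) := Finset.prod_congr rfl fun j hj => by rw [hkey j hj]


lemma aux_pmf_null {p : PMF ℕ} {c : ℕ} (hsupp : ∀ n, c ≤ n → p n = 0) :
    p.toMeasure {n : ℕ | c ≤ n} = 0 := by
  refine (PMF.toMeasure_apply_eq_zero_iff _ (hs := MeasurableSet.of_discrete)).2 ?_
  refine Set.disjoint_left.2 fun n hn hc => ?_
  exact (PMF.mem_support_iff _ _).1 hn (hsupp n hc)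

lemma aux_pmf_integrable {p : PMF ℕ} {c : ℕ} (hsupp : ∀ n, c ≤ n → p n = 0) (f : ℕ → ℝ) :
    Integrable f p.toMeasure := by
  refine Integrable.mono' (integrable_const (∑ m ∈ Finset.range c, ‖f m‖))
    (Measurable.of_discrete.aestronglyMeasurable) ?_
  rw [ae_iff]
  refine measure_mono_null (fun n hn => ?_) (aux_pmf_null hsupp)
  simp only [Set.mem_setOf_eq, not_le] at hn ⊢
  by_contra hc
  push_neg at hc
  exact absurd (Finset.single_le_sum (fun m _ => norm_nonneg (f m))
    (Finset.mem_range.2 hc)) (not_le.2 hn)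

lemma aux_mgf_int_le {p : PMF ℕ} {c : ℕ} (hsupp : ∀ n, c ≤ n → p n = 0)
    {a θ : ℝ} (ha : ∫ n : ℕ, (n : ℝ) ∂p.toMeasure = a) (ha0 : 0 ≤ a)
    (hθ0 : 0 ≤ θ) (hθ1 : θ ≤ 1) :
    ∫ n : ℕ, Real.exp (θ * n) ∂p.toMeasure
      ≤ Real.exp (θ * a + θ ^ 2 * (a * c * Real.exp c)) := by
  have aux_exp_le : ∀ u : ℝ, Real.exp u ≤ 1 + u * Real.exp u := by
    intro u
    have h := Real.add_one_le_exp (-u)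
    have hp : 0 < Real.exp u := Real.exp_pos u
    have h2 : Real.exp (-u) * Real.exp u = 1 := by rw [← Real.exp_add]; simp
    nlinarith [mul_le_mul_of_nonneg_right h hp.le]
  have hstep : ∫ n : ℕ, Real.exp (θ * n) ∂p.toMeasure
      ≤ ∫ n : ℕ, (1 + (θ * Real.exp (θ * c)) * n) ∂p.toMeasure := by
    refine integral_mono_ae (aux_pmf_integrable hsupp _) (aux_pmf_integrable hsupp _) ?_
    rw [Filter.EventuallyLE, ae_iff]
    refine measure_mono_null (fun n hn => ?_) (aux_pmf_null hsupp)
    simp only [Set.mem_setOf_eq, not_le] at hn ⊢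
    by_contra hc
    push_neg at hc
    have hnc : (n : ℝ) ≤ c := Nat.cast_le.2 hc.le
    have h1 : Real.exp (θ * n) ≤ 1 + (θ * n) * Real.exp (θ * n) := aux_exp_le _
    have h2 : Real.exp (θ * n) ≤ Real.exp (θ * c) :=
      Real.exp_le_exp.2 (mul_le_mul_of_nonneg_left hnc hθ0)
    have hn0 : (0:ℝ) ≤ n := Nat.cast_nonneg n
    nlinarith [mul_nonneg hθ0 hn0, Real.exp_pos (θ * n)]
  have hmean : ∫ n : ℕ, (1 + (θ * Real.exp (θ * c)) * n) ∂p.toMeasure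
      = 1 + (θ * Real.exp (θ * c)) * a := by
    rw [integral_add (integrable_const 1) ((aux_pmf_integrable hsupp _).const_mul _),
      integral_const, integral_const_mul, ha]
    simp
  rw [hmean] at hstep
  refine hstep.trans ?_
  have hy : (θ * Real.exp (θ * c)) * a ≤ θ * a + θ ^ 2 * (a * c * Real.exp c) := by
    have h1 : Real.exp (θ * c) ≤ 1 + (θ * c) * Real.exp (θ * c) := aux_exp_le _
    have h2 : Real.exp (θ * c) ≤ Real.exp c := by
      refine Real.exp_le_exp.2 ?_
      nlinarith [Nat.cast_nonneg (α := ℝ) c]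
    have hc0 : (0:ℝ) ≤ c := Nat.cast_nonneg c
    have h3 : θ * a * Real.exp (θ * c) ≤ θ * a * (1 + θ * c * Real.exp (θ * c)) :=
      mul_le_mul_of_nonneg_left h1 (mul_nonneg hθ0 ha0)
    have h4 : θ * a * θ * c * Real.exp (θ * c) ≤ θ * a * θ * c * Real.exp c :=
      mul_le_mul_of_nonneg_left h2
        (mul_nonneg (mul_nonneg (mul_nonneg hθ0 ha0) hθ0) hc0)
    nlinarith [h3, h4]
  calc 1 + (θ * Real.exp (θ * c)) * a ≤ 1 + (θ * a + θ ^ 2 * (a * c * Real.exp c)) := by linarith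
    _ ≤ _ := by rw [add_comm]; exact Real.add_one_le_exp _

section chernoff
variable {Ω : Type*} [MeasurableSpace Ω] {μ : Measure Ω} [IsProbabilityMeasure μ]

lemma aux_chernoff
    (Z1 : Ω → ℕ) (ξ : ℕ → ℕ → Ω → ℕ) (hξm : ∀ t i, Measurable (ξ t i))
    (Pbar : PMF ℕ) (hξlaw : ∀ t i, μ.map (ξ t i) = Pbar.toMeasure)
    (hindep : iIndepFun
      (fun o : Option (ℕ × ℕ) => o.elim Z1 (fun ti => ξ ti.1 ti.2)) μ)
    (kmax : ℕ) (hPbs : ∀ m, kmax ≤ m → Pbar m = 0)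
    (a : ℝ) (ha0 : 0 ≤ a) (hmean : ∫ m : ℕ, (m : ℝ) ∂Pbar.toMeasure = a)
    (θ : ℝ) (hθ0 : 0 ≤ θ) (hθ1 : θ ≤ 1) (t n : ℕ) (x : ℝ) :
    (μ {ω | x ≤ ((∑ i ∈ Finset.range n, ξ t i ω : ℕ) : ℝ)}).toReal
      ≤ Real.exp (-θ * x + n * (θ * a + θ ^ 2 * (a * kmax * Real.exp kmax))) := by
  have aux_pmf_null : Pbar.toMeasure {m : ℕ | kmax ≤ m} = 0 := by
    refine (PMF.toMeasure_apply_eq_zero_iff _ (hs := MeasurableSet.of_discrete)).2 ?_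
    exact Set.disjoint_left.2 fun m hm hc => (PMF.mem_support_iff _ _).1 hm (hPbs m hc)
  -- a.e. bound on each ξ t i
  have hae1 : ∀ i, ∀ᵐ ω ∂μ, ξ t i ω ≤ kmax := by
    intro i
    rw [ae_iff]
    have : {ω | ¬ ξ t i ω ≤ kmax} = ξ t i ⁻¹' {m : ℕ | kmax ≤ m ∧ kmax < m} := by
      ext ω; simp only [Set.mem_setOf_eq, not_le, Set.mem_preimage]; omega
    rw [this, ← Measure.map_apply (hξm t i) MeasurableSet.of_discrete, hξlaw t i]
    exact measure_mono_null (fun m hm => hm.1) aux_pmf_null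
  have haeS : ∀ᵐ ω ∂μ, ((∑ i ∈ Finset.range n, ξ t i ω : ℕ) : ℝ) ≤ (n : ℝ) * kmax := by
    filter_upwards [ae_all_iff.2 hae1] with ω hω
    have : (∑ i ∈ Finset.range n, ξ t i ω) ≤ n * kmax := by
      calc (∑ i ∈ Finset.range n, ξ t i ω) ≤ ∑ i ∈ Finset.range n, kmax :=
            Finset.sum_le_sum fun i _ => hω i
        _ = n * kmax := by rw [Finset.sum_const, Finset.card_range, smul_eq_mul]
    exact_mod_cast this
  have hSm : Measurable (fun ω => ((∑ i ∈ Finset.range n, ξ t i ω : ℕ) : ℝ)) :=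
    Measurable.of_discrete.comp (Finset.measurable_sum (Finset.range n) fun i _ => hξm t i)
  have hint : Integrable (fun ω =>
      Real.exp (θ * ((∑ i ∈ Finset.range n, ξ t i ω : ℕ) : ℝ))) μ := by
    refine Integrable.mono' (integrable_const (Real.exp (θ * (n * kmax))))
      ((Real.measurable_exp.comp (hSm.const_mul θ)).aestronglyMeasurable) ?_
    filter_upwards [haeS] with ω hω
    rw [Real.norm_eq_abs, abs_of_pos (Real.exp_pos _)]
    exact Real.exp_le_exp.2 (mul_le_mul_of_nonneg_left hω hθ0)
  -- Chernoff
  have hch := measure_ge_le_exp_mul_mgf (μ := μ)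
    (X := fun ω => ((∑ i ∈ Finset.range n, ξ t i ω : ℕ) : ℝ)) x hθ0 hint
  refine hch.trans ?_
  -- iid family
  have hiid : iIndepFun (fun i ω => ((ξ t i ω : ℕ) : ℝ)) μ := by
    have h1 := aux_iIndepFun_precomp hindep
      (g := fun i : ℕ => (some (t, i) : Option (ℕ × ℕ)))
      (fun i j h => by simpa using h)
    exact h1.comp (fun _ => (fun m : ℕ => (m : ℝ))) (fun _ => Measurable.of_discrete)
  -- mgf of the sum
  have hfeq : (fun ω => ((∑ i ∈ Finset.range n, ξ t i ω : ℕ) : ℝ))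
      = ∑ i ∈ Finset.range n, (fun ω => ((ξ t i ω : ℕ) : ℝ)) := by
    funext ω
    rw [Finset.sum_apply]
    push_cast
    rfl
  have hmgfsum : mgf (fun ω => ((∑ i ∈ Finset.range n, ξ t i ω : ℕ) : ℝ)) μ θ
      = ∏ i ∈ Finset.range n, mgf (fun ω => ((ξ t i ω : ℕ) : ℝ)) μ θ := by
    rw [hfeq]
    exact hiid.mgf_sum (fun i => Measurable.of_discrete.comp (hξm t i)) _
  -- single mgf value and bound
  have hsingle : ∀ i, mgf (fun ω => ((ξ t i ω : ℕ) : ℝ)) μ θ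
      ≤ Real.exp (θ * a + θ ^ 2 * (a * kmax * Real.exp kmax)) := by
    intro i
    have hval : mgf (fun ω => ((ξ t i ω : ℕ) : ℝ)) μ θ
        = ∫ m : ℕ, Real.exp (θ * m) ∂Pbar.toMeasure := by
      rw [mgf, ← hξlaw t i,
        integral_map (hξm t i).aemeasurable Measurable.of_discrete.aestronglyMeasurable]
    rw [hval]
    exact aux_mgf_int_le hPbs hmean ha0 hθ0 hθ1
  calc Real.exp (-θ * x) * mgf (fun ω => ((∑ i ∈ Finset.range n, ξ t i ω : ℕ) : ℝ)) μ θ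
      ≤ Real.exp (-θ * x)
        * Real.exp (θ * a + θ ^ 2 * (a * kmax * Real.exp kmax)) ^ n := by
        rw [hmgfsum]
        refine mul_le_mul_of_nonneg_left ?_ (Real.exp_pos _).le
        calc ∏ i ∈ Finset.range n, mgf (fun ω => ((ξ t i ω : ℕ) : ℝ)) μ θ
            ≤ ∏ _i ∈ Finset.range n,
              Real.exp (θ * a + θ ^ 2 * (a * kmax * Real.exp kmax)) :=
              Finset.prod_le_prod (fun i _ => mgf_nonneg) (fun i _ => hsingle i)
          _ = _ := by rw [Finset.prod_const, Finset.card_range]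
    _ = Real.exp (-θ * x + n * (θ * a + θ ^ 2 * (a * kmax * Real.exp kmax))) := by
        rw [← Real.exp_nat_mul, ← Real.exp_add]
end chernoff

set_option maxHeartbeats 2000000 in
/-- For the unimodular Galton–Watson process with generation sizes Z_t
(root law P on {k_min,…,k_max}, 2 ≤ k_min < k_max, later offspring law P̄
supported on {k_min−1,…,k_max−1}, a = E[P̄] > 1), there are constants
c₀, c₁ > 0 such that for every s ≥ k_max + 1,
P(Z_k ≤ a^k·s for all k) ≥ 1 − c₀·exp(−c₁·s). -/
theorem stmt9
    {Ω : Type*} [MeasurableSpace Ω] (μ : Measure Ω)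
    [IsProbabilityMeasure μ]
    (kmin kmax : ℕ) (h2 : 2 ≤ kmin) (hkk : kmin < kmax)
    (P Pbar : PMF ℕ)
    (hPsupp : ∀ k, P k ≠ 0 → k ∈ Finset.Icc kmin kmax)
    (b : ℝ) (hb : b = ∑' k : ℕ, (k : ℝ) * (P k).toReal)
    (hPbar : ∀ k : ℕ, (Pbar k).toReal = ((k : ℝ) + 1) * (P (k + 1)).toReal / b)
    (a : ℝ) (ha : a = ∑' k : ℕ, (k : ℝ) * (Pbar k).toReal) (ha1 : 1 < a)
    (Z1 : Ω → ℕ) (ξ : ℕ → ℕ → Ω → ℕ)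
    (hZ1m : Measurable Z1) (hξm : ∀ t i, Measurable (ξ t i))
    (hZ1law : μ.map Z1 = P.toMeasure)
    (hξlaw : ∀ t i, μ.map (ξ t i) = Pbar.toMeasure)
    (hindep : iIndepFun
      (fun o : Option (ℕ × ℕ) => o.elim Z1 (fun ti => ξ ti.1 ti.2)) μ)
    (Z : ℕ → Ω → ℕ) (hZone : Z 1 = Z1)
    (hZrec : ∀ t, 1 ≤ t → ∀ ω, Z (t + 1) ω = ∑ i ∈ Finset.range (Z t ω), ξ t i ω)
    : ∃ c₀ c₁ : ℝ, 0 < c₀ ∧ 0 < c₁ ∧ ∀ s : ℝ, (kmax : ℝ) + 1 ≤ s →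
      1 - c₀ * Real.exp (-(c₁ * s)) ≤
        (μ {ω | ∀ k : ℕ, 1 ≤ k → (Z k ω : ℝ) ≤ a ^ k * s}).toReal := by
  -- basic facts
  have hkmax3 : 3 ≤ kmax := by omega
  have hkmax1 : (1:ℝ) ≤ (kmax:ℝ) := by exact_mod_cast (by omega : 1 ≤ kmax)
  have hkmaxpos : (0:ℝ) < kmax := by linarith
  have ha0 : (0:ℝ) < a := lt_trans one_pos ha1
  have hPs : ∀ n, kmax < n → P n = 0 := by
    intro n hn
    by_contra h
    have := hPsupp n h
    rw [Finset.mem_Icc] at this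
    omega
  have hPbs : ∀ m, kmax ≤ m → Pbar m = 0 := by
    intro m hm
    have h0 : P (m + 1) = 0 := hPs (m + 1) (by omega)
    have h1 := hPbar m
    rw [h0] at h1
    simp only [ENNReal.toReal_zero, mul_zero, zero_div] at h1
    have h2 := ENNReal.toReal_eq_zero_iff (Pbar m)
    rw [h1] at h2
    rcases h2.1 rfl with h | h
    · exact h
    · exact absurd h (PMF.apply_ne_top Pbar m)
  have hmean : ∫ m : ℕ, (m : ℝ) ∂Pbar.toMeasure = a := by
    rw [PMF.integral_eq_tsum _ _ (aux_pmf_integrable hPbs _), ha]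
    exact tsum_congr fun k => by rw [smul_eq_mul, mul_comm]
  -- constants
  set ρ : ℝ := Real.sqrt ((a + 1) / (2 * a)) with hρdef
  have hargpos : 0 < (a + 1) / (2 * a) := by positivity
  have hρpos : 0 < ρ := Real.sqrt_pos.2 hargpos
  have hρsq' : ρ ^ 2 = (a + 1) / (2 * a) := Real.sq_sqrt hargpos.le
  have hρlt : ρ < 1 := by
    have h : (a + 1) / (2 * a) < 1 := by
      rw [div_lt_one (by positivity)]
      linarith
    nlinarith [hρpos, hρsq', h]
  set q : ℝ := (a + 1) / 2 with hqdef
  have hρsq : ρ ^ 2 * a = q := by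
    rw [hρsq', hqdef]
    field_simp
  have hq1 : 1 < q := by rw [hqdef]; linarith
  set K : ℝ := a * kmax * Real.exp kmax with hKdef
  have hK : 0 < K := by positivity
  set δ0 : ℝ := (1 - ρ) / (kmax + 1) with hδ0def
  have hδ0 : 0 < δ0 := div_pos (by linarith) (by positivity)
  have hδ01 : δ0 ≤ 1 := by
    rw [hδ0def, div_le_one (by positivity)]
    linarith
  set c₁ : ℝ := δ0 ^ 2 * a ^ 2 / (4 * K) with hc₁def
  have hc₁ : 0 < c₁ := by positivity
  set r : ℝ := Real.exp (-(c₁ * ((kmax:ℝ) + 1) * (q - 1))) with hrdef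
  have hr0 : 0 < r := Real.exp_pos _
  have hr1 : r < 1 := by
    rw [hrdef, Real.exp_lt_one_iff]
    have h : 0 < c₁ * ((kmax:ℝ) + 1) * (q - 1) := by
      have : 0 < q - 1 := by linarith
      positivity
    linarith
  have h1r : 0 < 1 - r := by linarith
  refine ⟨r / (1 - r), c₁, div_pos hr0 h1r, hc₁, ?_⟩
  intro s hs
  have hspos : 0 < s := lt_of_lt_of_le (by positivity) hs
  -- sequences
  set δ : ℕ → ℝ := fun k => δ0 * ρ ^ k with hδdef
  set θ : ℕ → ℝ := fun k => δ k * a / (2 * K) with hθdef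
  have hδpos : ∀ k, 0 < δ k := by
    intro k
    simp only [hδdef]
    positivity
  have hδle : ∀ k, δ k ≤ δ0 := by
    intro k
    simp only [hδdef]
    nlinarith [pow_le_one₀ hρpos.le hρlt.le (n := k), pow_nonneg hρpos.le k]
  have hθ0 : ∀ k, 0 ≤ θ k := by
    intro k
    simp only [hθdef]
    have := hδpos k
    positivity
  have hθ1 : ∀ k, θ k ≤ 1 := by
    intro k
    simp only [hθdef, hKdef]
    rw [div_le_one (by positivity)]
    have he : (1:ℝ) ≤ Real.exp kmax := Real.one_le_exp (by positivity)
    have h1 : δ k * a ≤ a := by nlinarith [hδle k, hδpos k]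
    have h2 : a ≤ 2 * (a * kmax * Real.exp kmax) := by
      nlinarith [mul_pos ha0 hkmaxpos,
        mul_nonneg (mul_nonneg ha0.le hkmaxpos.le) (sub_nonneg.2 he)]
    linarith
  -- plain measurability of Z k
  have hZm : ∀ k, 1 ≤ k → Measurable (Z k) := by
    intro k hk
    induction k, hk using Nat.le_induction with
    | base => rw [hZone]; exact hZ1m
    | succ u hu ih =>
      rw [funext (hZrec u hu)]
      exact aux_measurable_sum_range ih (fun i => hξm u i)
  -- the exponent computation
  have hexpid : ∀ k n : ℕ, (n:ℝ) ≤ a ^ k * s →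
      -θ k * (a * n + δ k * a ^ (k + 1) * s) + n * (θ k * a + θ k ^ 2 * K)
        ≤ -(c₁ * s) * q ^ k := by
    intro k n hn
    have h1 : -θ k * (a * n + δ k * a ^ (k + 1) * s) + n * (θ k * a + θ k ^ 2 * K)
        = -(θ k * (δ k * a ^ (k + 1) * s)) + n * (θ k ^ 2 * K) := by ring
    have h2 : (n:ℝ) * (θ k ^ 2 * K) ≤ (a ^ k * s) * (θ k ^ 2 * K) := by
      refine mul_le_mul_of_nonneg_right hn ?_
      have := hθ0 k
      positivity
    have h3 : -(θ k * (δ k * a ^ (k + 1) * s)) + (a ^ k * s) * (θ k ^ 2 * K)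
        = -(c₁ * s) * q ^ k := by
      have hqk : q ^ k = (ρ ^ 2) ^ k * a ^ k := by rw [← mul_pow, hρsq]
      simp only [hθdef, hδdef, hc₁def, hqk]
      have hKne : K ≠ 0 := ne_of_gt hK
      field_simp
      ring
    linarith
  -- the per-(k, n) Chernoff bound
  have hkey : ∀ k, 1 ≤ k → ∀ n : ℕ, (n:ℝ) ≤ a ^ k * s →
      μ (Z k ⁻¹' {n} ∩ (fun ω => ∑ i ∈ Finset.range n, ξ k i ω) ⁻¹'
          {m : ℕ | a * n + δ k * a ^ (k + 1) * s ≤ (m:ℝ)})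
        ≤ μ (Z k ⁻¹' {n}) * ENNReal.ofReal (Real.exp (-(c₁ * s) * q ^ k)) := by
    intro k hk n hn
    rw [aux_indep Z1 ξ hZ1m hξm hindep Z hZone hZrec k hk n {n}
      {m : ℕ | a * n + δ k * a ^ (k + 1) * s ≤ (m:ℝ)}]
    refine mul_le_mul_right ?_ _
    have hch := aux_chernoff Z1 ξ hξm Pbar hξlaw hindep kmax hPbs a ha0.le hmean
      (θ k) (hθ0 k) (hθ1 k) k n (a * n + δ k * a ^ (k + 1) * s)
    have hle2 : (μ {ω | a * n + δ k * a ^ (k + 1) * s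
        ≤ ((∑ i ∈ Finset.range n, ξ k i ω : ℕ) : ℝ)}).toReal
        ≤ Real.exp (-(c₁ * s) * q ^ k) := by
      refine hch.trans ?_
      exact Real.exp_le_exp.2 (hexpid k n hn)
    have hseteq : (fun ω => ∑ i ∈ Finset.range n, ξ k i ω) ⁻¹'
        {m : ℕ | a * n + δ k * a ^ (k + 1) * s ≤ (m:ℝ)}
        = {ω | a * n + δ k * a ^ (k + 1) * s ≤ ((∑ i ∈ Finset.range n, ξ k i ω : ℕ) : ℝ)} := rfl
    rw [hseteq, ← ENNReal.ofReal_toReal (measure_ne_top μ _)]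
    exact ENNReal.ofReal_le_ofReal hle2
  -- the per-step bad event bound
  set Bset : ℕ → Set Ω := fun k => {ω | ((Z k ω : ℕ) : ℝ) ≤ a ^ k * s ∧
      a * (Z k ω) + δ k * a ^ (k + 1) * s < ((Z (k + 1) ω : ℕ) : ℝ)} with hBdef
  have hBk : ∀ k, 1 ≤ k → μ (Bset k) ≤ ENNReal.ofReal (Real.exp (-(c₁ * s) * q ^ k)) := by
    intro k hk
    have hsub : Bset k ⊆ ⋃ n : ℕ, ⋃ (_ : (n:ℝ) ≤ a ^ k * s),
        (Z k ⁻¹' {n} ∩ (fun ω => ∑ i ∈ Finset.range n, ξ k i ω) ⁻¹'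
          {m : ℕ | a * n + δ k * a ^ (k + 1) * s ≤ (m:ℝ)}) := by
      intro ω hω
      obtain ⟨h1, h2⟩ := hω
      refine Set.mem_iUnion.2 ⟨Z k ω, Set.mem_iUnion.2 ⟨h1, rfl, ?_⟩⟩
      have hrec := hZrec k hk ω
      simp only [Set.mem_preimage, Set.mem_setOf_eq]
      rw [← hrec]
      exact h2.le
    calc μ (Bset k) ≤ ∑' n : ℕ, μ (⋃ (_ : (n:ℝ) ≤ a ^ k * s),
          (Z k ⁻¹' {n} ∩ (fun ω => ∑ i ∈ Finset.range n, ξ k i ω) ⁻¹'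
            {m : ℕ | a * n + δ k * a ^ (k + 1) * s ≤ (m:ℝ)})) :=
        (measure_mono hsub).trans (measure_iUnion_le _)
      _ ≤ ∑' n : ℕ, μ (Z k ⁻¹' {n}) * ENNReal.ofReal (Real.exp (-(c₁ * s) * q ^ k)) := by
        refine ENNReal.tsum_le_tsum fun n => ?_
        by_cases hn : (n:ℝ) ≤ a ^ k * s
        · classical
          rw [Set.iUnion_eq_if, if_pos hn]
          exact hkey k hk n hn
        · classical
          rw [Set.iUnion_eq_if, if_neg hn]
          simp
      _ = (∑' n : ℕ, μ (Z k ⁻¹' {n})) * ENNReal.ofReal (Real.exp (-(c₁ * s) * q ^ k)) :=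
        ENNReal.tsum_mul_right
      _ ≤ 1 * ENNReal.ofReal (Real.exp (-(c₁ * s) * q ^ k)) := by
        refine mul_le_mul_left ?_ _
        have hdisj : Pairwise (Function.onFun Disjoint fun n : ℕ => Z k ⁻¹' {n}) := by
          intro m n hmn
          refine Set.disjoint_left.2 fun ω hm hn => ?_
          simp only [Set.mem_preimage, Set.mem_singleton_iff] at hm hn
          exact hmn (hm ▸ hn ▸ rfl)
        have := measure_iUnion (μ := μ) hdisj
          (fun n => (hZm k hk) (measurableSet_singleton n))
        rw [← this]
        exact measure_mono (Set.subset_univ _) |>.trans (le_of_eq (measure_univ))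
      _ = ENNReal.ofReal (Real.exp (-(c₁ * s) * q ^ k)) := one_mul _
  -- geometric sum bound
  have hD : ∀ m : ℕ, ∑ j ∈ Finset.range m, δ (j + 1) ≤ 1 / ((kmax:ℝ) + 1) := by
    intro m
    have hne1 : (1:ℝ) - ρ ≠ 0 := by linarith
    have hsum : ∑ j ∈ Finset.range m, δ (j + 1) = δ0 * ρ * ∑ j ∈ Finset.range m, ρ ^ j := by
      rw [Finset.mul_sum]
      refine Finset.sum_congr rfl fun j _ => ?_
      simp only [hδdef]
      rw [pow_succ]
      ring
    rw [hsum]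
    have hgeom : ∑ j ∈ Finset.range m, ρ ^ j ≤ 1 / (1 - ρ) := by
      rw [geom_sum_eq hρlt.ne m]
      have heq : (ρ ^ m - 1) / (ρ - 1) = (1 - ρ ^ m) / (1 - ρ) := by
        rw [div_eq_div_iff (by linarith) (by linarith)]
        ring
      rw [heq]
      refine div_le_div_of_nonneg_right ?_ (by linarith)
      nlinarith [pow_nonneg hρpos.le m]
    have h1 : δ0 * ρ * ∑ j ∈ Finset.range m, ρ ^ j ≤ δ0 * ρ * (1 / (1 - ρ)) :=
      mul_le_mul_of_nonneg_left hgeom (by positivity)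
    refine h1.trans ?_
    have h2 : δ0 * ρ * (1 / (1 - ρ)) ≤ δ0 * (1 / (1 - ρ)) :=
      mul_le_mul_of_nonneg_right (mul_le_of_le_one_right hδ0.le hρlt.le)
        (le_of_lt (one_div_pos.2 (by linarith)))
    refine h2.trans (le_of_eq ?_)
    rw [hδ0def, div_mul_div_comm, mul_one, mul_comm ((kmax:ℝ)+1) (1-ρ), ← div_div, div_self hne1]
  -- key invariant inequality
  have hinv_key : ∀ m : ℕ,
      a ^ m * kmax + a ^ (m + 1) * s * (∑ j ∈ Finset.range m, δ (j + 1))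
        ≤ a ^ (m + 1) * s := by
    intro m
    have h2 : (kmax:ℝ) / a ≤ kmax := by
      rw [div_le_iff₀ ha0]
      nlinarith
    have h3 : s * (∑ j ∈ Finset.range m, δ (j + 1)) ≤ s * (1 / ((kmax:ℝ) + 1)) :=
      mul_le_mul_of_nonneg_left (hD m) hspos.le
    have h4 : s * (1 / ((kmax:ℝ) + 1)) ≤ s - kmax := by
      rw [mul_one_div, div_le_iff₀ (by positivity : (0:ℝ) < (kmax:ℝ) + 1)]
      nlinarith
    have h1 : (kmax:ℝ) / a + s * (∑ j ∈ Finset.range m, δ (j + 1)) ≤ s := by linarith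
    calc a ^ m * (kmax:ℝ) + a ^ (m + 1) * s * (∑ j ∈ Finset.range m, δ (j + 1))
        = a ^ (m + 1) * ((kmax:ℝ) / a + s * (∑ j ∈ Finset.range m, δ (j + 1))) := by
          rw [pow_succ]
          field_simp
      _ ≤ a ^ (m + 1) * s := mul_le_mul_of_nonneg_left h1 (by positivity)
  -- the good event
  set Eset : Set Ω := {ω | ∀ k : ℕ, 1 ≤ k → (Z k ω : ℝ) ≤ a ^ k * s} with hEdef
  have hNsub : Esetᶜ ⊆ {ω | kmax < Z1 ω} ∪ ⋃ k : ℕ, Bset (k + 1) := by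
    intro ω hω
    by_contra hc
    simp only [Set.mem_union, Set.mem_iUnion, not_or, not_exists] at hc
    obtain ⟨hc1, hc2⟩ := hc
    simp only [Set.mem_setOf_eq, not_lt] at hc1
    refine hω ?_
    have hinv : ∀ m : ℕ, ((Z (m + 1) ω : ℕ) : ℝ)
        ≤ a ^ m * kmax + a ^ (m + 1) * s * (∑ j ∈ Finset.range m, δ (j + 1)) := by
      intro m
      induction m with
      | zero =>
        have hz : Z (0 + 1) ω = Z1 ω := by norm_num [hZone]
        rw [hz]
        simp only [pow_zero, one_mul, Finset.range_zero, Finset.sum_empty, mul_zero, add_zero]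
        exact_mod_cast hc1
      | succ m ih =>
        have hle1 : ((Z (m + 1) ω : ℕ) : ℝ) ≤ a ^ (m + 1) * s := ih.trans (hinv_key m)
        have hnb := hc2 m
        simp only [hBdef, Set.mem_setOf_eq, not_and, not_lt] at hnb
        have hstep : ((Z (m + 1 + 1) ω : ℕ) : ℝ)
            ≤ a * (Z (m + 1) ω) + δ (m + 1) * a ^ (m + 1 + 1) * s := hnb hle1
        have h3 : a * ((Z (m + 1) ω : ℕ) : ℝ)
            ≤ a * (a ^ m * kmax + a ^ (m + 1) * s * (∑ j ∈ Finset.range m, δ (j + 1))) :=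
          mul_le_mul_of_nonneg_left ih ha0.le
        rw [Finset.sum_range_succ]
        calc ((Z (m + 1 + 1) ω : ℕ) : ℝ)
            ≤ a * (Z (m + 1) ω) + δ (m + 1) * a ^ (m + 1 + 1) * s := hstep
          _ ≤ a * (a ^ m * kmax + a ^ (m + 1) * s * (∑ j ∈ Finset.range m, δ (j + 1)))
              + δ (m + 1) * a ^ (m + 1 + 1) * s := by linarith
          _ = a ^ (m + 1) * kmax + a ^ (m + 1 + 1) * s
              * ((∑ j ∈ Finset.range m, δ (j + 1)) + δ (m + 1)) := by ring
    intro k hk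
    obtain ⟨m, rfl⟩ : ∃ m, k = m + 1 := ⟨k - 1, by omega⟩
    exact (hinv m).trans (hinv_key m)
  have hNnull : μ {ω | kmax < Z1 ω} = 0 := by
    have hseteq : {ω | kmax < Z1 ω} = Z1 ⁻¹' {n : ℕ | kmax < n} := rfl
    rw [hseteq, ← Measure.map_apply hZ1m MeasurableSet.of_discrete, hZ1law]
    refine (PMF.toMeasure_apply_eq_zero_iff _ (hs := MeasurableSet.of_discrete)).2 ?_
    exact Set.disjoint_left.2 fun n hn hc => (PMF.mem_support_iff _ _).1 hn (hPs n hc)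
  have hEm : MeasurableSet Eset := by
    have hseteq : Eset = ⋂ k : ℕ, ⋂ (_ : 1 ≤ k), Z k ⁻¹' {n : ℕ | (n : ℝ) ≤ a ^ k * s} := by
      ext ω
      simp only [hEdef, Set.mem_setOf_eq, Set.mem_iInter, Set.mem_preimage]
    rw [hseteq]
    exact MeasurableSet.iInter fun k => MeasurableSet.iInter fun hk =>
      (hZm k hk) MeasurableSet.of_discrete
  -- the real comparison for each k
  have hreal : ∀ k : ℕ, Real.exp (-(c₁ * s) * q ^ (k + 1))
      ≤ Real.exp (-(c₁ * s)) * r ^ (k + 1) := by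
    intro k
    rw [hrdef, ← Real.exp_nat_mul, ← Real.exp_add]
    refine Real.exp_le_exp.2 ?_
    have hb : 1 + ((k : ℝ) + 1) * (q - 1) ≤ q ^ (k + 1) := by
      have hben := one_add_mul_le_pow (a := q - 1) (by linarith) (k + 1)
      have hq' : 1 + (q - 1) = q := by ring
      rw [hq'] at hben
      have : ((k + 1 : ℕ) : ℝ) = (k : ℝ) + 1 := by push_cast; ring
      rw [this] at hben
      exact hben
    have h1 : c₁ * s * (1 + ((k : ℝ) + 1) * (q - 1)) ≤ c₁ * s * q ^ (k + 1) :=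
      mul_le_mul_of_nonneg_left hb (by positivity)
    have h2 : c₁ * ((kmax : ℝ) + 1) * (q - 1) * ((k : ℝ) + 1)
        ≤ c₁ * s * (q - 1) * ((k : ℝ) + 1) := by
      refine mul_le_mul_of_nonneg_right ?_ (by positivity)
      refine mul_le_mul_of_nonneg_right ?_ (by linarith)
      exact mul_le_mul_of_nonneg_left hs hc₁.le
    have hcast : ((k + 1 : ℕ) : ℝ) = (k : ℝ) + 1 := by push_cast; ring
    rw [hcast]
    nlinarith [h1, h2]
  -- summability of the bound
  have hsummable : Summable (fun k : ℕ => Real.exp (-(c₁ * s)) * r ^ (k + 1)) := by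
    have heq : (fun k : ℕ => Real.exp (-(c₁ * s)) * r ^ (k + 1))
        = fun k : ℕ => (Real.exp (-(c₁ * s)) * r) * r ^ k := by
      funext k
      rw [pow_succ]
      ring
    rw [heq]
    exact (summable_geometric_of_lt_one hr0.le hr1).mul_left _
  -- total bound on the complement
  have hbound : μ Esetᶜ ≤ ENNReal.ofReal (Real.exp (-(c₁ * s)) * (r / (1 - r))) := by
    calc μ Esetᶜ ≤ μ ({ω | kmax < Z1 ω} ∪ ⋃ k : ℕ, Bset (k + 1)) := measure_mono hNsub
      _ ≤ μ {ω | kmax < Z1 ω} + μ (⋃ k : ℕ, Bset (k + 1)) := measure_union_le _ _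
      _ = μ (⋃ k : ℕ, Bset (k + 1)) := by rw [hNnull, zero_add]
      _ ≤ ∑' k : ℕ, μ (Bset (k + 1)) := measure_iUnion_le _
      _ ≤ ∑' k : ℕ, ENNReal.ofReal (Real.exp (-(c₁ * s)) * r ^ (k + 1)) :=
          ENNReal.tsum_le_tsum fun k =>
            (hBk (k + 1) (by omega)).trans (ENNReal.ofReal_le_ofReal (hreal k))
      _ = ENNReal.ofReal (∑' k : ℕ, Real.exp (-(c₁ * s)) * r ^ (k + 1)) :=
          (ENNReal.ofReal_tsum_of_nonneg (fun k => by positivity) hsummable).symm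
      _ = ENNReal.ofReal (Real.exp (-(c₁ * s)) * (r / (1 - r))) := by
          congr 1
          have heq : ∀ k : ℕ, Real.exp (-(c₁ * s)) * r ^ (k + 1)
              = (Real.exp (-(c₁ * s)) * r) * r ^ k := fun k => by rw [pow_succ]; ring
          rw [tsum_congr heq, tsum_mul_left, tsum_geometric_of_lt_one hr0.le hr1,
            div_eq_mul_inv]
          ring
  have htoReal : (μ Esetᶜ).toReal ≤ Real.exp (-(c₁ * s)) * (r / (1 - r)) :=
    ENNReal.toReal_le_of_le_ofReal (by positivity) hbound
  have hsplit : (μ Eset).toReal + (μ Esetᶜ).toReal = 1 := by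
    rw [← ENNReal.toReal_add (measure_ne_top μ _) (measure_ne_top μ _),
      measure_add_measure_compl hEm]
    simp
  have hcomm : Real.exp (-(c₁ * s)) * (r / (1 - r))
      = r / (1 - r) * Real.exp (-(c₁ * s)) := mul_comm _ _
  linarith
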